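/- Let R = R(a_1,…,a_l) and R' = R(b_1,…,b_m) be top-l and top-m partial rankings in S_n. Let b_{i_1},…,b_{i_q} be the elements of {b_1,…,b_m} ∖ {a_1,…,a_l}, listed with i_1 < i_2 < ⋯ < i_q, and let R'' = R(a_1,…,a_l, b_{i_1},…,b_{i_q}) ⊆ R be the corresponding top-(l+q) partial ranking. If τ is uniformly distributed on R', then Π_R(τ) is uniformly distributed on R''; that is, the pushforward of the uniform probability measure on R' under the map Π_R equals the uniform probability measure on R''. -/

import Mathlib

/-- The Kendall (tau) distance between two permutations of `Fin n`:
the number of pairs `(x, y)` with `x < y` on which `σ⁻¹` and `τ⁻¹`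
disagree in relative order. -/
def kendallDist {n : ℕ} (σ τ : Equiv.Perm (Fin n)) : ℕ :=
  (Finset.univ.filter (fun p : Fin n × Fin n =>
    p.1 < p.2 ∧ ¬((σ⁻¹ p.1 < σ⁻¹ p.2) ↔ (τ⁻¹ p.1 < τ⁻¹ p.2)))).card

/-- The top-`k` partial ranking determined by the items `a 0, …, a (k-1)`:
the set of full rankings (permutations) `σ` with `σ i = a i` for the first
`k` positions. -/
def topkFinset {n k : ℕ} (hk : k ≤ n) (a : Fin k → Fin n) :
    Finset (Equiv.Perm (Fin n)) :=
  Finset.univ.filter fun σ => ∀ i : Fin k, σ (Fin.castLE hk i) = a i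

/-- The permutation of `Fin n` fixing the first `k` positions and reversing
the order of the remaining `n - k` positions. -/
def revAfter (n k : ℕ) : Equiv.Perm (Fin n) :=
  Function.Involutive.toPerm
    (fun p => if _h : (p : ℕ) < k then p
      else ⟨n + k - 1 - (p : ℕ), by have := p.isLt; omega⟩)
    (by
      intro p
      have hp := p.isLt
      by_cases h : (p : ℕ) < k
      · simp [h]
      · have h2 : ¬ (n + k - 1 - (p : ℕ) < k) := by omega
        simp only [dif_neg h, dif_neg h2]
        ext
        simp
        omega)

/-- The antithetic permutation of `σ` relative to a top-`k` partial ranking: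
the first `k` positions are unchanged and the remaining positions are
reversed, i.e. `A σ (k+j) = σ (n+1-j)` (in 1-indexed notation). -/
def antithetic (n k : ℕ) (σ : Equiv.Perm (Fin n)) : Equiv.Perm (Fin n) :=
  σ * revAfter n k

lemma mem_topk {n k : ℕ} {hk : k ≤ n} {a : Fin k → Fin n} {σ : Equiv.Perm (Fin n)} :
    σ ∈ topkFinset hk a ↔ ∀ i : Fin k, σ (Fin.castLE hk i) = a i := by
  simp [topkFinset]

lemma topk_inv_apply {n k : ℕ} {hk : k ≤ n} {a : Fin k → Fin n} {σ : Equiv.Perm (Fin n)}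
    (hσ : σ ∈ topkFinset hk a) (i : Fin k) : σ⁻¹ (a i) = Fin.castLE hk i := by
  rw [← mem_topk.mp hσ i]; simp

lemma topk_inv_ge {n k : ℕ} {hk : k ≤ n} {a : Fin k → Fin n} {σ : Equiv.Perm (Fin n)}
    (hσ : σ ∈ topkFinset hk a) {x : Fin n} (hx : x ∉ Set.range a) :
    k ≤ ((σ⁻¹ x : Fin n) : ℕ) := by
  by_contra h
  push_neg at h
  exact hx ⟨⟨(σ⁻¹ x : Fin n), h⟩, by rw [← mem_topk.mp hσ ⟨(σ⁻¹ x : Fin n), h⟩]; simp [Fin.ext_iff]⟩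

/-- ordering relative to items outside `A` matches between `ρ` and `τ`. -/
def Matches {n : ℕ} (A : Set (Fin n)) (ρ τ : Equiv.Perm (Fin n)) : Prop :=
  ∀ x y : Fin n, x ∉ A → y ∉ A → ((ρ⁻¹ x < ρ⁻¹ y) ↔ (τ⁻¹ x < τ⁻¹ y))

lemma perm_strictMono_eq_one {n : ℕ} (f : Equiv.Perm (Fin n)) (hf : StrictMono (f : Fin n → Fin n)) :
    f = 1 := by
  have h : (f : Fin n → Fin n) = (id : Fin n → Fin n) :=
    (@StrictMono.range_inj (Fin n) (Fin n) _ _ (inferInstance : WellFoundedLT (Fin n)) _ _ hf strictMono_id).mp (by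
      simp [Set.range_eq_univ.mpr f.surjective])
  exact Equiv.ext fun i => congrFun h i

lemma matches_unique {n l : ℕ} {hl : l ≤ n} {a : Fin l → Fin n} {τ ρ ρ' : Equiv.Perm (Fin n)}
    (hρ : ρ ∈ topkFinset hl a) (hρ' : ρ' ∈ topkFinset hl a)
    (h1 : Matches (Set.range a) ρ τ) (h2 : Matches (Set.range a) ρ' τ) : ρ = ρ' := by
  have key : ∀ x y : Fin n, ρ⁻¹ x < ρ⁻¹ y ↔ ρ'⁻¹ x < ρ'⁻¹ y := by
    intro x y
    by_cases hx : x ∈ Set.range a <;> by_cases hy : y ∈ Set.range a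
    · obtain ⟨i, rfl⟩ := hx; obtain ⟨j, rfl⟩ := hy
      rw [topk_inv_apply hρ, topk_inv_apply hρ', topk_inv_apply hρ, topk_inv_apply hρ']
    · obtain ⟨i, rfl⟩ := hx
      have g1 := topk_inv_ge hρ hy
      have g2 := topk_inv_ge hρ' hy
      rw [topk_inv_apply hρ, topk_inv_apply hρ']
      have hi := i.isLt
      simp only [Fin.lt_iff_val_lt_val, Fin.coe_castLE]
      omega
    · obtain ⟨j, rfl⟩ := hy
      have g1 := topk_inv_ge hρ hx
      have g2 := topk_inv_ge hρ' hx
      rw [topk_inv_apply hρ, topk_inv_apply hρ']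
      have hj := j.isLt
      simp only [Fin.lt_iff_val_lt_val, Fin.coe_castLE]
      omega
    · rw [h1 x y hx hy, h2 x y hx hy]
  have hmono : StrictMono ((ρ'⁻¹ * ρ : Equiv.Perm (Fin n)) : Fin n → Fin n) := by
    intro u v huv
    have := (key (ρ u) (ρ v)).mp (by simpa using huv)
    simpa using this
  have := perm_strictMono_eq_one _ hmono
  have : ρ'⁻¹ * ρ = 1 := this
  group at this ⊢
  exact (eq_of_inv_mul_eq_one this).symm

lemma topk_order_det {n l : ℕ} {hl : l ≤ n} {a : Fin l → Fin n} {ρ ρ' : Equiv.Perm (Fin n)}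
    (hρ : ρ ∈ topkFinset hl a) (hρ' : ρ' ∈ topkFinset hl a) {x y : Fin n}
    (h : x ∈ Set.range a ∨ y ∈ Set.range a) :
    (ρ⁻¹ x < ρ⁻¹ y) ↔ (ρ'⁻¹ x < ρ'⁻¹ y) := by
  by_cases hx : x ∈ Set.range a <;> by_cases hy : y ∈ Set.range a
  · obtain ⟨i, rfl⟩ := hx; obtain ⟨j, rfl⟩ := hy
    rw [topk_inv_apply hρ, topk_inv_apply hρ', topk_inv_apply hρ, topk_inv_apply hρ']
  · obtain ⟨i, rfl⟩ := hx
    have g1 := topk_inv_ge hρ hy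
    have g2 := topk_inv_ge hρ' hy
    rw [topk_inv_apply hρ, topk_inv_apply hρ']
    have hi := i.isLt
    simp only [Fin.lt_iff_val_lt_val, Fin.coe_castLE]
    omega
  · obtain ⟨j, rfl⟩ := hy
    have g1 := topk_inv_ge hρ hx
    have g2 := topk_inv_ge hρ' hx
    rw [topk_inv_apply hρ, topk_inv_apply hρ']
    have hj := j.isLt
    simp only [Fin.lt_iff_val_lt_val, Fin.coe_castLE]
    omega
  · tauto

/-- if `ρ` matches `τ` and `ρ' ∈ R` is different, its Kendall distance is strictly larger. -/
lemma dist_lt {n l : ℕ} {hl : l ≤ n} {a : Fin l → Fin n} {τ ρ ρ' : Equiv.Perm (Fin n)}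
    (hρ : ρ ∈ topkFinset hl a) (hρ' : ρ' ∈ topkFinset hl a)
    (hmatch : Matches (Set.range a) ρ τ) (hne : ρ' ≠ ρ) :
    kendallDist ρ τ < kendallDist ρ' τ := by
  classical
  set Free : Fin n × Fin n → Prop := fun p => p.1 ∉ Set.range a ∧ p.2 ∉ Set.range a with hFree
  have hsplit : ∀ σ : Equiv.Perm (Fin n), kendallDist σ τ =
      (Finset.univ.filter (fun p : Fin n × Fin n =>
        (p.1 < p.2 ∧ ¬((σ⁻¹ p.1 < σ⁻¹ p.2) ↔ (τ⁻¹ p.1 < τ⁻¹ p.2))) ∧ Free p)).card +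
      (Finset.univ.filter (fun p : Fin n × Fin n =>
        (p.1 < p.2 ∧ ¬((σ⁻¹ p.1 < σ⁻¹ p.2) ↔ (τ⁻¹ p.1 < τ⁻¹ p.2))) ∧ ¬ Free p)).card := by
    intro σ
    have h := Finset.card_filter_add_card_filter_not
      (s := Finset.univ.filter (fun p : Fin n × Fin n =>
        p.1 < p.2 ∧ ¬((σ⁻¹ p.1 < σ⁻¹ p.2) ↔ (τ⁻¹ p.1 < τ⁻¹ p.2)))) (p := Free)
    rw [Finset.filter_filter, Finset.filter_filter] at h
    rw [kendallDist, ← h]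
  have hA : (Finset.univ.filter (fun p : Fin n × Fin n =>
      (p.1 < p.2 ∧ ¬((ρ⁻¹ p.1 < ρ⁻¹ p.2) ↔ (τ⁻¹ p.1 < τ⁻¹ p.2))) ∧ Free p)) = ∅ := by
    ext p
    simp only [Finset.mem_filter, Finset.mem_univ, true_and, Finset.notMem_empty, iff_false]
    rintro ⟨⟨_, hdis⟩, hf1, hf2⟩
    exact hdis (hmatch p.1 p.2 hf1 hf2)
  have hB : (Finset.univ.filter (fun p : Fin n × Fin n =>
        (p.1 < p.2 ∧ ¬((ρ⁻¹ p.1 < ρ⁻¹ p.2) ↔ (τ⁻¹ p.1 < τ⁻¹ p.2))) ∧ ¬ Free p)) =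
      (Finset.univ.filter (fun p : Fin n × Fin n =>
        (p.1 < p.2 ∧ ¬((ρ'⁻¹ p.1 < ρ'⁻¹ p.2) ↔ (τ⁻¹ p.1 < τ⁻¹ p.2))) ∧ ¬ Free p)) := by
    apply Finset.filter_congr
    intro p _
    have : ¬ Free p → ((ρ⁻¹ p.1 < ρ⁻¹ p.2) ↔ (ρ'⁻¹ p.1 < ρ'⁻¹ p.2)) := by
      intro hnf
      apply topk_order_det hρ hρ'
      by_contra hcon
      push_neg at hcon
      exact hnf ⟨hcon.1, hcon.2⟩
    constructor
    · rintro ⟨⟨h1, h2⟩, h3⟩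
      exact ⟨⟨h1, fun hiff => h2 ((this h3).trans hiff)⟩, h3⟩
    · rintro ⟨⟨h1, h2⟩, h3⟩
      exact ⟨⟨h1, fun hiff => h2 (((this h3).symm).trans hiff)⟩, h3⟩
  have hC : (Finset.univ.filter (fun p : Fin n × Fin n =>
      (p.1 < p.2 ∧ ¬((ρ'⁻¹ p.1 < ρ'⁻¹ p.2) ↔ (τ⁻¹ p.1 < τ⁻¹ p.2))) ∧ Free p)).Nonempty := by
    rw [Finset.nonempty_iff_ne_empty]
    intro hempty
    apply hne
    apply matches_unique hρ' hρ _ hmatch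
    intro x y hx hy
    have key : ∀ u v : Fin n, u < v → u ∉ Set.range a → v ∉ Set.range a →
        ((ρ'⁻¹ u < ρ'⁻¹ v) ↔ (τ⁻¹ u < τ⁻¹ v)) := by
      intro u v huv hu hv
      by_contra hdis
      have : (u, v) ∈ (∅ : Finset (Fin n × Fin n)) := by
        rw [← hempty]
        simp only [Finset.mem_filter, Finset.mem_univ, true_and]
        exact ⟨⟨huv, hdis⟩, hu, hv⟩
      simp at this
    rcases lt_trichotomy x y with h | h | h
    · exact key x y h hx hy
    · subst h; simp
    · have h1 := key y x h hy hx
      have hxy : x ≠ y := fun hc => by subst hc; exact lt_irrefl _ h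
      constructor
      · intro hlt
        rcases lt_trichotomy (τ⁻¹ x) (τ⁻¹ y) with hh | hh | hh
        · exact hh
        · exact absurd (Equiv.injective _ hh) hxy
        · exact absurd (h1.mpr hh) (asymm hlt)
      · intro hlt
        rcases lt_trichotomy (ρ'⁻¹ x) (ρ'⁻¹ y) with hh | hh | hh
        · exact hh
        · exact absurd (Equiv.injective _ hh) hxy
        · exact absurd (h1.mp hh) (asymm hlt)
  rw [hsplit ρ, hsplit ρ', hA, hB]
  have hpos := Finset.card_pos.mpr hC
  simp only [Finset.card_empty]
  omega

lemma exists_match {n l m q : ℕ} (hl : l ≤ n) (hm : m ≤ n) (hlq : l + q ≤ n)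
    (a : Fin l → Fin n) (ha : Function.Injective a)
    (b : Fin m → Fin n) (hb : Function.Injective b)
    (e : Fin q → Fin m) (he : StrictMono e)
    (hrange : Set.range (b ∘ e) = Set.range b \ Set.range a)
    {τ : Equiv.Perm (Fin n)} (hτ : τ ∈ topkFinset hm b) :
    ∃ ρ ∈ topkFinset hlq (Fin.append a (b ∘ e)), Matches (Set.range a) ρ τ := by
  classical
  set c : Fin (l + q) → Fin n := Fin.append a (b ∘ e) with hc
  have hcl : ∀ (i : Fin (l + q)) (h : (i : ℕ) < l), c i = a ⟨i, h⟩ := by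
    intro i h
    have hi : i = Fin.castAdd q ⟨i, h⟩ := by ext; rfl
    exact (congrArg c hi).trans (Fin.append_left _ _ _)
  have hcr : ∀ (i : Fin (l + q)) (h : l ≤ (i : ℕ)), c i = b (e ⟨(i : ℕ) - l, by
      have := i.isLt; omega⟩) := by
    intro i h
    have hi : i = Fin.natAdd l ⟨(i : ℕ) - l, by have := i.isLt; omega⟩ := by
      ext; simp; omega
    exact (congrArg c hi).trans (Fin.append_right _ _ _)
  have hdisj : ∀ (i : Fin l) (j : Fin q), a i ≠ b (e j) := by
    intro i j h
    have hmem : b (e j) ∈ Set.range (b ∘ e) := ⟨j, rfl⟩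
    rw [hrange] at hmem
    exact hmem.2 ⟨i, h⟩
  have hbe : Function.Injective (b ∘ e) := hb.comp he.injective
  have hcinj : Function.Injective c := by
    intro i j hij
    by_cases hi : (i : ℕ) < l <;> by_cases hj : (j : ℕ) < l
    · rw [hcl i hi, hcl j hj] at hij
      have h2 := congrArg Fin.val (ha hij)
      simp only [] at h2
      ext; exact h2
    · rw [hcl i hi, hcr j (by omega)] at hij
      exact absurd hij (hdisj _ _)
    · rw [hcr i (by omega), hcl j hj] at hij
      exact absurd hij.symm (hdisj _ _)
    · rw [hcr i (by omega), hcr j (by omega)] at hij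
      have := hbe hij
      have := congrArg Fin.val this
      simp at this
      ext
      have hi' := i.isLt; have hj' := j.isLt
      omega
  -- b-range is covered by a-range and (b∘e)-range
  have hbcov : ∀ v : Fin n, v ∈ Set.range b → v ∈ Set.range a ∨ v ∈ Set.range (b ∘ e) := by
    intro v hv
    by_cases h : v ∈ Set.range a
    · exact Or.inl h
    · exact Or.inr (by rw [hrange]; exact ⟨hv, h⟩)
  set S : Finset (Fin n) := Finset.univ.filter (fun x => ∀ i : Fin (l + q), c i ≠ x) with hS
  have hSmem : ∀ x : Fin n, x ∈ S ↔ ∀ i : Fin (l + q), c i ≠ x := by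
    intro x; simp [hS]
  have hScard : S.card = n - (l + q) := by
    have : S = (Finset.univ.image c)ᶜ := by
      ext x
      simp [hSmem, eq_comm]
    rw [this, Finset.card_compl, Finset.card_image_of_injective _ hcinj]
    simp
  set T : Finset (Fin n) := S.image (fun z => τ⁻¹ z) with hT
  have hTcard : T.card = n - (l + q) := by
    rw [hT, Finset.card_image_of_injective _ (Equiv.injective _), hScard]
  set oIso := T.orderIsoOfFin hTcard with hoIso
  -- the underlying function
  set f : Fin n → Fin n := fun i =>
    if h1 : (i : ℕ) < l + q then c ⟨i, h1⟩
    else τ ((oIso ⟨(i : ℕ) - (l + q), by have := i.isLt; omega⟩ : T) : Fin n) with hf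
  have hfS : ∀ (k : Fin (n - (l + q))), τ ((oIso k : T) : Fin n) ∈ S := by
    intro k
    have hk : ((oIso k : T) : Fin n) ∈ T := (oIso k).2
    obtain ⟨s, hs, hst⟩ := Finset.mem_image.mp (show _ ∈ S.image (fun z => τ⁻¹ z) from hk)
    rw [← hst]
    simpa using hs
  have hfinj : Function.Injective f := by
    intro i j hij
    rw [hf] at hij
    by_cases hi : (i : ℕ) < l + q <;> by_cases hj : (j : ℕ) < l + q
    · simp only [dif_pos hi, dif_pos hj] at hij
      have := hcinj hij
      have := congrArg Fin.val this
      ext; simpa using this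
    · simp only [dif_pos hi, dif_neg hj] at hij
      have := hfS ⟨(j : ℕ) - (l + q), by have := j.isLt; omega⟩
      rw [← hij] at this
      exact absurd rfl ((hSmem _).mp this ⟨i, hi⟩)
    · simp only [dif_neg hi, dif_pos hj] at hij
      have := hfS ⟨(i : ℕ) - (l + q), by have := i.isLt; omega⟩
      rw [hij] at this
      exact absurd rfl ((hSmem _).mp this ⟨j, hj⟩)
    · simp only [dif_neg hi, dif_neg hj] at hij
      have h1 := τ.injective hij
      have h2 : (⟨(i : ℕ) - (l + q), by have := i.isLt; omega⟩ : Fin (n - (l + q))) =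
          ⟨(j : ℕ) - (l + q), by have := j.isLt; omega⟩ :=
        oIso.injective (Subtype.coe_injective h1)
      have := congrArg Fin.val h2
      simp at this
      have hi' := i.isLt; have hj' := j.isLt
      ext; omega
  set ρ : Equiv.Perm (Fin n) := Equiv.ofBijective f (Finite.injective_iff_bijective.mp hfinj)
    with hρ
  have hρapp : ∀ i : Fin n, ρ i = f i := fun i => rfl
  have hρinv : ∀ (x : Fin n) (i : Fin n), ρ i = x → ρ⁻¹ x = i := by
    intro x i h
    rw [← h]
    simp
  have hρmem : ρ ∈ topkFinset hlq c := by
    rw [mem_topk]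
    intro i
    simp only [hρapp, hf]
    have hi : ((Fin.castLE hlq i : Fin n) : ℕ) = (i : ℕ) := rfl
    rw [dif_pos (show ((Fin.castLE hlq i : Fin n) : ℕ) < l + q by rw [hi]; exact i.isLt)]
    congr 1
  refine ⟨ρ, hρmem, ?_⟩
  -- inverse computations
  have hinv_be : ∀ j : Fin q, (ρ⁻¹ (b (e j)) : ℕ) = l + (j : ℕ) := by
    intro j
    have hlj : l + (j : ℕ) < n := by have := j.isLt; omega
    have : ρ ⟨l + (j : ℕ), hlj⟩ = b (e j) := by
      simp only [hρapp, hf]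
      rw [dif_pos (show (((⟨l + (j : ℕ), hlj⟩ : Fin n)) : ℕ) < l + q by simp)]
      rw [hcr _ (by simp)]
      congr 2
      ext; simp
    rw [hρinv _ _ this]
  have hinv_S : ∀ x : Fin n, x ∈ S →
      ∃ k : Fin (n - (l + q)), (ρ⁻¹ x : ℕ) = l + q + (k : ℕ) ∧
        ((oIso k : T) : Fin n) = τ⁻¹ x := by
    intro x hx
    have hmemT : τ⁻¹ x ∈ T := Finset.mem_image_of_mem _ hx
    set k := oIso.symm ⟨τ⁻¹ x, hmemT⟩ with hk
    refine ⟨k, ?_, by rw [hk]; simp⟩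
    have hkn : l + q + (k : ℕ) < n := by have := k.isLt; omega
    have : ρ ⟨l + q + (k : ℕ), hkn⟩ = x := by
      simp only [hρapp, hf]
      rw [dif_neg (show ¬ (((⟨l + q + (k : ℕ), hkn⟩ : Fin n)) : ℕ) < l + q by simp)]
      have : (⟨l + q + (k : ℕ) - (l + q), by omega⟩ : Fin (n - (l + q))) = k := by
        ext; simp
      rw [this, hk]
      simp
    rw [hρinv _ _ this]
  -- τ-inverse computations
  have hτinv_be : ∀ j : Fin q, ((τ⁻¹ (b (e j)) : Fin n) : ℕ) = ((e j : Fin m) : ℕ) := by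
    intro j
    rw [topk_inv_apply hτ (e j)]
    rfl
  have hτinv_S : ∀ x : Fin n, x ∈ S → m ≤ ((τ⁻¹ x : Fin n) : ℕ) := by
    intro x hx
    apply topk_inv_ge hτ
    intro hxb
    rcases hbcov x hxb with h | h
    · obtain ⟨i, rfl⟩ := h
      apply (hSmem _).mp hx (Fin.castAdd q i)
      have hil : ((Fin.castAdd q i : Fin (l + q)) : ℕ) < l := i.isLt
      rw [hcl _ hil]
      congr 1
    · obtain ⟨j, rfl⟩ := h
      have hjl : l ≤ ((Fin.natAdd l j : Fin (l + q)) : ℕ) := by simp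
      apply (hSmem _).mp hx (Fin.natAdd l j)
      rw [hcr _ hjl]
      simp only [Function.comp_apply]
      congr 2
      ext; simp
  -- classification of non-a items
  have hclass : ∀ x : Fin n, x ∉ Set.range a → (∃ j : Fin q, b (e j) = x) ∨ x ∈ S := by
    intro x hx
    by_cases h : ∃ i : Fin (l + q), c i = x
    · obtain ⟨i, hi⟩ := h
      by_cases hil : (i : ℕ) < l
      · rw [hcl i hil] at hi
        exact absurd ⟨_, hi⟩ hx
      · rw [hcr i (by omega)] at hi
        exact Or.inl ⟨_, hi⟩
    · push_neg at h
      exact Or.inr ((hSmem x).mpr h)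
  -- main matching
  intro x y hx hy
  rcases hclass x hx with ⟨jx, hjx⟩ | hxS <;> rcases hclass y hy with ⟨jy, hjy⟩ | hyS
  · subst hjx; subst hjy
    have r1 := hinv_be jx
    have r2 := hinv_be jy
    have t1 := hτinv_be jx
    have t2 := hτinv_be jy
    have hee : (jx : ℕ) < (jy : ℕ) ↔ ((e jx : Fin m) : ℕ) < ((e jy : Fin m) : ℕ) := by
      constructor
      · intro h; exact he (by exact h)
      · intro h
        by_contra hcon
        push_neg at hcon
        rcases lt_or_eq_of_le hcon with h' | h'
        · exact absurd (he (show jy < jx from h')) (by omega)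
        · have : jx = jy := by ext; omega
          subst this; omega
    simp only [Fin.lt_iff_val_lt_val]
    omega
  · subst hjx
    obtain ⟨k, hk, -⟩ := hinv_S y hyS
    have r1 := hinv_be jx
    have t1 := hτinv_be jx
    have t2 := hτinv_S y hyS
    have hjq := jx.isLt
    have hem := (e jx).isLt
    simp only [Fin.lt_iff_val_lt_val]
    omega
  · subst hjy
    obtain ⟨k, hk, -⟩ := hinv_S x hxS
    have r1 := hinv_be jy
    have t1 := hτinv_be jy
    have t2 := hτinv_S x hxS
    have hjq := jy.isLt
    have hem := (e jy).isLt
    simp only [Fin.lt_iff_val_lt_val]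
    omega
  · obtain ⟨kx, hkx, hox⟩ := hinv_S x hxS
    obtain ⟨ky, hky, hoy⟩ := hinv_S y hyS
    have hkk : (kx : ℕ) < (ky : ℕ) ↔ ((τ⁻¹ x : Fin n) : ℕ) < ((τ⁻¹ y : Fin n) : ℕ) := by
      have h0 : oIso kx < oIso ky ↔ kx < ky := oIso.lt_iff_lt
      have h1 : oIso kx < oIso ky ↔ ((oIso kx : T) : Fin n) < ((oIso ky : T) : Fin n) :=
        Iff.rfl
      rw [h1, hox, hoy] at h0
      rw [Fin.lt_iff_val_lt_val, Fin.lt_iff_val_lt_val] at h0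
      exact h0.symm
    simp only [Fin.lt_iff_val_lt_val]
    omega

/-- Let `R = R(a_1,…,a_l)` and `R' = R(b_1,…,b_m)` be top-`l` and top-`m`
partial rankings, let `b ∘ e` enumerate (in increasing order of index into
`b`) the elements of `{b_1,…,b_m} \ {a_1,…,a_l}`, and let
`R'' = R(a_1,…,a_l, b_{i_1},…,b_{i_q})`. If `τ` is uniform on `R'`, then the
Kendall projection `Π_R(τ)` (here any fixed choice function `pr` selecting the
Kendall-closest element of `R`) is uniform on `R''`; i.e. the pushforward of
the uniform measure on `R'` under `pr` is the uniform measure on `R''`. -/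
theorem proj_pushforward_uniform {n l m q : ℕ} (hl : l ≤ n) (hm : m ≤ n)
    (hlq : l + q ≤ n)
    (a : Fin l → Fin n) (ha : Function.Injective a)
    (b : Fin m → Fin n) (hb : Function.Injective b)
    (e : Fin q → Fin m) (he : StrictMono e)
    (hrange : Set.range (b ∘ e) = Set.range b \ Set.range a)
    (pr : Equiv.Perm (Fin n) → Equiv.Perm (Fin n))
    (hpr : ∀ τ, pr τ ∈ topkFinset hl a ∧
      ∀ ρ ∈ topkFinset hl a, kendallDist (pr τ) τ ≤ kendallDist ρ τ)
    (hR' : (topkFinset hm b).Nonempty)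
    (hR'' : (topkFinset hlq (Fin.append a (b ∘ e))).Nonempty) :
    (PMF.uniformOfFinset (topkFinset hm b) hR').map pr =
      PMF.uniformOfFinset (topkFinset hlq (Fin.append a (b ∘ e))) hR'' := by
  classical
  -- R'' ⊆ R
  have hsub : ∀ ρ : Equiv.Perm (Fin n), ρ ∈ topkFinset hlq (Fin.append a (b ∘ e)) →
      ρ ∈ topkFinset hl a := by
    intro ρ hρ
    rw [mem_topk]
    intro i
    have h1 := mem_topk.mp hρ (Fin.castAdd q i)
    rw [Fin.append_left] at h1
    have h2 : Fin.castLE hl i = Fin.castLE hlq (Fin.castAdd q i) := by ext; rfl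
    rw [h2]; exact h1
  -- projection characterization
  have hspec : ∀ τ, τ ∈ topkFinset hm b →
      pr τ ∈ topkFinset hlq (Fin.append a (b ∘ e)) ∧ Matches (Set.range a) (pr τ) τ := by
    intro τ hτ
    obtain ⟨ρ, hρmem, hρmatch⟩ := exists_match hl hm hlq a ha b hb e he hrange hτ
    have heq : pr τ = ρ := by
      by_contra hne
      have h1 := dist_lt (hsub _ hρmem) (hpr τ).1 hρmatch hne
      have h2 := (hpr τ).2 ρ (hsub _ hρmem)
      omega
    rw [heq]; exact ⟨hρmem, hρmatch⟩
  -- equivariance under permutations fixing the relevant items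
  have hfixmul : ∀ g : Equiv.Perm (Fin n), (∀ i : Fin l, g (a i) = a i) →
      (∀ j : Fin q, g (b (e j)) = b (e j)) → ∀ τ, τ ∈ topkFinset hm b →
      g * τ ∈ topkFinset hm b ∧ pr (g * τ) = g * pr τ := by
    intro g hga hgbe τ hτ
    have hgb : ∀ i : Fin m, g (b i) = b i := by
      intro i
      by_cases h : b i ∈ Set.range a
      · obtain ⟨j, hj⟩ := h
        rw [← hj]; exact hga j
      · have hmem : b i ∈ Set.range (b ∘ e) := by rw [hrange]; exact ⟨⟨i, rfl⟩, h⟩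
        obtain ⟨j, hj⟩ := hmem
        rw [← hj]; exact hgbe j
    have hmem : g * τ ∈ topkFinset hm b := by
      rw [mem_topk]; intro i
      have h1 := mem_topk.mp hτ i
      rw [Equiv.Perm.mul_apply, h1, hgb i]
    refine ⟨hmem, ?_⟩
    obtain ⟨hmem1, hmatch1⟩ := hspec τ hτ
    obtain ⟨hmem2, hmatch2⟩ := hspec _ hmem
    have hga' : ∀ v : Fin n, v ∉ Set.range a → g⁻¹ v ∉ Set.range a := by
      rintro v hv ⟨i, hi⟩
      apply hv
      refine ⟨i, ?_⟩
      have : g (a i) = g (g⁻¹ v) := congrArg g hi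
      rw [hga i] at this
      simpa using this
    have hmemg : g * pr τ ∈ topkFinset hl a := by
      rw [mem_topk]; intro i
      rw [Equiv.Perm.mul_apply, mem_topk.mp (hsub _ hmem1) i, hga i]
    have hmatchg : Matches (Set.range a) (g * pr τ) (g * τ) := by
      intro x y hx hy
      have hx' := hga' x hx
      have hy' := hga' y hy
      simp only [mul_inv_rev, Equiv.Perm.mul_apply]
      exact hmatch1 _ _ hx' hy'
    exact matches_unique (hsub _ hmem2) hmemg hmatch2 hmatchg
  -- fibers have equal cardinality
  have hgfix : ∀ ρ₁ ∈ topkFinset hlq (Fin.append a (b ∘ e)),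
      ∀ ρ₂ ∈ topkFinset hlq (Fin.append a (b ∘ e)),
      (∀ i : Fin l, (ρ₂ * ρ₁⁻¹) (a i) = a i) ∧
      (∀ j : Fin q, (ρ₂ * ρ₁⁻¹) (b (e j)) = b (e j)) := by
    intro ρ₁ h1 ρ₂ h2
    constructor
    · intro i
      have e1 : ρ₁⁻¹ (a i) = Fin.castLE hlq (Fin.castAdd q i) := by
        have := topk_inv_apply h1 (Fin.castAdd q i)
        rwa [Fin.append_left] at this
      rw [Equiv.Perm.mul_apply, e1]
      have := mem_topk.mp h2 (Fin.castAdd q i)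
      rwa [Fin.append_left] at this
    · intro j
      have e1 : ρ₁⁻¹ (b (e j)) = Fin.castLE hlq (Fin.natAdd l j) := by
        have := topk_inv_apply h1 (Fin.natAdd l j)
        rwa [Fin.append_right] at this
      rw [Equiv.Perm.mul_apply, e1]
      have := mem_topk.mp h2 (Fin.natAdd l j)
      rwa [Fin.append_right] at this
  have hfible : ∀ ρ₁ ∈ topkFinset hlq (Fin.append a (b ∘ e)),
      ∀ ρ₂ ∈ topkFinset hlq (Fin.append a (b ∘ e)),
      ((topkFinset hm b).filter (fun τ => pr τ = ρ₁)).card ≤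
      ((topkFinset hm b).filter (fun τ => pr τ = ρ₂)).card := by
    intro ρ₁ h1 ρ₂ h2
    obtain ⟨hga, hgbe⟩ := hgfix ρ₁ h1 ρ₂ h2
    apply Finset.card_le_card_of_injOn (fun τ => (ρ₂ * ρ₁⁻¹) * τ)
    · intro τ hτ
      rw [Finset.mem_coe, Finset.mem_filter] at hτ ⊢
      obtain ⟨hτR, hτpr⟩ := hτ
      obtain ⟨hm1, hm2⟩ := hfixmul (ρ₂ * ρ₁⁻¹) hga hgbe τ hτR
      refine ⟨hm1, ?_⟩
      rw [hm2, hτpr]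
      group
    · intro τ₁ _ τ₂ _ h
      exact mul_left_cancel h
  have hfibeq : ∀ ρ₁ ∈ topkFinset hlq (Fin.append a (b ∘ e)),
      ∀ ρ₂ ∈ topkFinset hlq (Fin.append a (b ∘ e)),
      ((topkFinset hm b).filter (fun τ => pr τ = ρ₁)).card =
      ((topkFinset hm b).filter (fun τ => pr τ = ρ₂)).card :=
    fun ρ₁ h1 ρ₂ h2 => le_antisymm (hfible ρ₁ h1 ρ₂ h2) (hfible ρ₂ h2 ρ₁ h1)
  -- total count
  have hcardsum : (topkFinset hm b).card =
      ∑ ρ ∈ topkFinset hlq (Fin.append a (b ∘ e)),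
        ((topkFinset hm b).filter (fun τ => pr τ = ρ)).card :=
    Finset.card_eq_sum_card_fiberwise (fun τ hτ => (hspec τ hτ).1)
  -- PMF computation
  ext x
  rw [PMF.map_apply, PMF.uniformOfFinset_apply, tsum_fintype]
  have hsummand : ∀ τ : Equiv.Perm (Fin n),
      (@ite ENNReal (x = pr τ) (Classical.propDecidable _)
        ((PMF.uniformOfFinset (topkFinset hm b) hR') τ) 0) =
      if τ ∈ (topkFinset hm b).filter (fun τ => pr τ = x)
        then ((topkFinset hm b).card : ENNReal)⁻¹ else 0 := by
    intro τ
    rw [PMF.uniformOfFinset_apply]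
    by_cases h1 : x = pr τ <;> by_cases h2 : τ ∈ topkFinset hm b
    · have hmem : τ ∈ (topkFinset hm b).filter (fun τ => pr τ = x) :=
        Finset.mem_filter.mpr ⟨h2, h1.symm⟩
      simp [h1, h2, hmem]
    · have hmem : τ ∉ (topkFinset hm b).filter (fun τ => pr τ = x) :=
        fun hc => h2 (Finset.mem_filter.mp hc).1
      simp [h1, h2, hmem]
    · have hmem : τ ∉ (topkFinset hm b).filter (fun τ => pr τ = x) :=
        fun hc => h1 (Finset.mem_filter.mp hc).2.symm
      simp [h1, hmem]
    · have hmem : τ ∉ (topkFinset hm b).filter (fun τ => pr τ = x) :=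
        fun hc => h1 (Finset.mem_filter.mp hc).2.symm
      simp [h1, hmem]
  have hsum1 : (∑ τ : Equiv.Perm (Fin n),
      @ite ENNReal (x = pr τ) (Classical.propDecidable _)
        ((PMF.uniformOfFinset (topkFinset hm b) hR') τ) 0) =
      ∑ τ : Equiv.Perm (Fin n),
      (if τ ∈ (topkFinset hm b).filter (fun τ => pr τ = x)
        then ((topkFinset hm b).card : ENNReal)⁻¹ else 0) :=
    Finset.sum_congr rfl (fun τ _ => hsummand τ)
  refine hsum1.trans ?_
  rw [Finset.sum_ite_mem, Finset.univ_inter, Finset.sum_const]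
  by_cases hx : x ∈ topkFinset hlq (Fin.append a (b ∘ e))
  · rw [if_pos hx]
    set k := ((topkFinset hm b).filter (fun τ => pr τ = x)).card with hk
    have hcard2 : (topkFinset hm b).card =
        (topkFinset hlq (Fin.append a (b ∘ e))).card * k := by
      rw [hcardsum, Finset.sum_congr rfl (fun ρ hρ => hfibeq ρ hρ x hx), Finset.sum_const,
        smul_eq_mul]
    have hk0 : k ≠ 0 := by
      intro h
      rw [h, mul_zero] at hcard2
      exact absurd hcard2 (Finset.card_pos.mpr hR').ne'
    have hR''0 : ((topkFinset hlq (Fin.append a (b ∘ e))).card : ENNReal) ≠ 0 := by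
      simp [Finset.card_ne_zero_of_mem hx]
    rw [hcard2, nsmul_eq_mul, Nat.cast_mul,
      ENNReal.mul_inv (Or.inl hR''0) (Or.inl (ENNReal.natCast_ne_top _)),
      ← mul_assoc, mul_comm (k : ENNReal) _, mul_assoc,
      ENNReal.mul_inv_cancel (by exact_mod_cast hk0) (ENNReal.natCast_ne_top _), mul_one]
  · rw [if_neg hx]
    have hempty : (topkFinset hm b).filter (fun τ => pr τ = x) = ∅ := by
      rw [Finset.eq_empty_iff_forall_notMem]
      intro τ hτ
      rw [Finset.mem_filter] at hτ
      exact hx (hτ.2 ▸ (hspec τ hτ.1).1)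
    rw [hempty, Finset.card_empty, zero_smul]
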